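/- Let G and H be Hausdorff topological groups, f : G → H a continuous open group homomorphism, and U a symmetric open neighborhood of the identity of G such that G is U-locally uniform. Then H is f(U)-locally uniform (note that f(U) is a symmetric open neighborhood of the identity of H). In particular, if G is locally uniform then H is locally uniform. -/

import Mathlib

open Filter Set Topology Pointwise

/-- The left uniformity filter of a topological group. -/
def leftUF (G : Type*) [Group G] [TopologicalSpace G] : Filter (G × G) :=
  Filter.comap (fun p : G × G => p.1⁻¹ * p.2) (nhds 1)

/-- The right uniformity filter of a topological group. -/
def rightUF (G : Type*) [Group G] [TopologicalSpace G] : Filter (G × G) :=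
  Filter.comap (fun p : G × G => p.1 * p.2⁻¹) (nhds 1)

/-- The product of a uniformity-like filter on `G × G` with itself, as a filter on
`(G × G) × (G × G)`; this agrees with the product uniformity when the filter is a uniformity. -/
def prodUF {G : Type*} (F : Filter (G × G)) : Filter ((G × G) × (G × G)) :=
  Filter.comap (fun q : (G × G) × (G × G) => (q.1.1, q.2.1)) F ⊓
    Filter.comap (fun q : (G × G) × (G × G) => (q.1.2, q.2.2)) F

/-- Multiplication is uniformly continuous on the set `s ⊆ G × G` with respect to the
uniformity-like filter `F` on `G × G`. -/
def MulUCOn {G : Type*} [Mul G] (F : Filter (G × G)) (s : Set (G × G)) : Prop :=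
  Filter.Tendsto (fun q : (G × G) × (G × G) => (q.1.1 * q.1.2, q.2.1 * q.2.2))
    (prodUF F ⊓ 𝓟 (s ×ˢ s)) F

/-- Elimination form of `MulUCOn`. -/
lemma mulUCOn_elim {G : Type*} [Mul G] {F : Filter (G × G)} {s : Set (G × G)}
    (h : MulUCOn F s) {D : Set (G × G)} (hD : D ∈ F) :
    ∃ E ∈ F, ∀ x₁ x₂ y₁ y₂ : G, (x₁, x₂) ∈ E → (y₁, y₂) ∈ E →
      (x₁, y₁) ∈ s → (x₂, y₂) ∈ s → (x₁ * y₁, x₂ * y₂) ∈ D := by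
  have hmem := h hD
  rw [Filter.mem_map, Filter.mem_inf_iff] at hmem
  obtain ⟨A, hA, B, hB, hAB⟩ := hmem
  rw [prodUF, Filter.mem_inf_iff] at hA
  obtain ⟨A₁, hA₁, A₂, hA₂, hA12⟩ := hA
  obtain ⟨E₁, hE₁, hE₁sub⟩ := Filter.mem_comap.mp hA₁
  obtain ⟨E₂, hE₂, hE₂sub⟩ := Filter.mem_comap.mp hA₂
  refine ⟨E₁ ∩ E₂, Filter.inter_mem hE₁ hE₂, fun x₁ x₂ y₁ y₂ hx hy h₁ h₂ => ?_⟩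
  have hq : (((x₁, y₁), (x₂, y₂)) : (G × G) × (G × G)) ∈ A ∩ B := by
    constructor
    · rw [hA12]
      exact ⟨hE₁sub hx.1, hE₂sub hy.2⟩
    · rw [Filter.mem_principal] at hB
      exact hB ⟨h₁, h₂⟩
  have h' : (((x₁, y₁), (x₂, y₂)) : (G × G) × (G × G)) ∈
      (fun q : (G × G) × (G × G) => (q.1.1 * q.1.2, q.2.1 * q.2.2)) ⁻¹' D := by
    rw [hAB]; exact hq
  exact h'

/-- Local SIN property: conjugation by elements of `S` is equicontinuous at `1`. -/
def LocSIN {G : Type*} [Group G] [TopologicalSpace G] (S : Set G) : Prop :=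
  ∀ W ∈ 𝓝 (1 : G), ∃ V ∈ 𝓝 (1 : G), ∀ a ∈ S, ∀ v ∈ V, a * v * a⁻¹ ∈ W

lemma locSIN_of_mulUCOn {G : Type*} [Group G] [TopologicalSpace G]
    (U : Set G) (hUo : IsOpen U) (hU1 : (1 : G) ∈ U) (hUs : U⁻¹ = U)
    (u : UniformSpace G) (hut : u.toTopologicalSpace = ‹TopologicalSpace G›)
    (h : MulUCOn (@uniformity G u) ((U ^ 2) ×ˢ (U ^ 2))) :
    LocSIN U := by
  have hUU2 : U ⊆ U ^ 2 := fun a ha => by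
    rw [sq]
    exact mul_one a ▸ Set.mul_mem_mul ha hU1
  intro W hW
  -- translate neighborhood to the uniformity `u`
  have hW' : W ∈ @nhds G u.toTopologicalSpace 1 := by rw [hut]; exact hW
  obtain ⟨D, hD, hDW⟩ := (@UniformSpace.mem_nhds_iff G u 1 W).mp hW'
  obtain ⟨E, hE, hEmul⟩ := mulUCOn_elim h hD
  obtain ⟨E', hE', hE'mul⟩ := mulUCOn_elim h hE
  have hball : {v : G | ((1 : G), v) ∈ E'} ∈ @nhds G u.toTopologicalSpace 1 :=
    @UniformSpace.ball_mem_nhds G u 1 E' hE'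
  rw [hut] at hball
  refine ⟨{v : G | ((1 : G), v) ∈ E'} ∩ U, Filter.inter_mem hball (hUo.mem_nhds hU1), ?_⟩
  rintro a ha v ⟨hv, hvU⟩
  have haU2 : a ∈ U ^ 2 := hUU2 ha
  have hainv : a⁻¹ ∈ U := by rw [← hUs, Set.mem_inv, inv_inv]; exact ha
  -- step 1 : (a, a * v) ∈ E
  have hrefl : ∀ x : G, (x, x) ∈ E' := fun x => refl_mem_uniformity hE'
  have step1 : (a * 1, a * v) ∈ E :=
    hE'mul a a 1 v (hrefl a) hv ⟨haU2, hUU2 hU1⟩ ⟨haU2, hUU2 hvU⟩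
  rw [mul_one] at step1
  -- step 2 : (a * a⁻¹, (a * v) * a⁻¹) ∈ D
  have hreflE : (a⁻¹, a⁻¹) ∈ E := refl_mem_uniformity hE
  have havU2 : a * v ∈ U ^ 2 := by rw [sq]; exact Set.mul_mem_mul ha hvU
  have step2 : (a * a⁻¹, a * v * a⁻¹) ∈ D :=
    hEmul a (a * v) a⁻¹ a⁻¹ step1 hreflE ⟨haU2, hUU2 hainv⟩ ⟨havU2, hUU2 hainv⟩
  have : a * v * a⁻¹ ∈ UniformSpace.ball (1 : G) D := by
    simpa [UniformSpace.ball, mul_inv_cancel] using step2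
  exact hDW this

lemma locSIN_image {G H : Type*} [Group G] [TopologicalSpace G]
    [Group H] [TopologicalSpace H]
    (f : G →* H) (hfc : Continuous f) (hfo : IsOpenMap f)
    {U : Set G} (hU : LocSIN U) : LocSIN (f '' U) := by
  intro W hW
  have hpre : f ⁻¹' W ∈ 𝓝 (1 : G) := by
    have := hfc.continuousAt (x := (1 : G))
    rw [ContinuousAt, map_one] at this
    exact this hW
  obtain ⟨V, hV, hVconj⟩ := hU _ hpre
  obtain ⟨V', hV'V, hV'o, hV'1⟩ := mem_nhds_iff.mp hV
  refine ⟨f '' V', (hfo V' hV'o).mem_nhds ⟨1, hV'1, map_one f⟩, ?_⟩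
  rintro b ⟨a, ha, rfl⟩ w ⟨v, hv, rfl⟩
  have : f a * f v * (f a)⁻¹ = f (a * v * a⁻¹) := by
    rw [map_mul, map_mul, map_inv]
  rw [this]
  exact hVconj a ha v (hV'V hv)

lemma locSIN_mul {H : Type*} [Group H] [TopologicalSpace H]
    {S T : Set H} (hS : LocSIN S) (hT : LocSIN T) : LocSIN (S * T) := by
  intro W hW
  obtain ⟨V₁, hV₁, hV₁conj⟩ := hS W hW
  obtain ⟨V, hV, hVconj⟩ := hT V₁ hV₁
  refine ⟨V, hV, ?_⟩
  rintro a ⟨b₁, hb₁, b₂, hb₂, rfl⟩ v hv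
  have key : b₁ * b₂ * v * (b₁ * b₂)⁻¹ = b₁ * (b₂ * v * b₂⁻¹) * b₁⁻¹ := by group
  rw [key]
  exact hV₁conj b₁ hb₁ _ (hVconj b₂ hb₂ v hv)

lemma mulUCOn_of_locSIN {H : Type*} [Group H] [TopologicalSpace H] [IsTopologicalGroup H]
    {S : Set H} (hS : LocSIN S) :
    MulUCOn (@uniformity H (IsTopologicalGroup.rightUniformSpace H)) (S ×ˢ S) := by
  intro D hD
  rw [uniformity_eq_comap_nhds_one', Filter.mem_comap] at hD
  obtain ⟨W, hW, hWD⟩ := hD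
  obtain ⟨W₀, hW₀, hW₀mul⟩ := exists_nhds_one_split hW
  obtain ⟨V, hV, hVconj⟩ := hS W₀ hW₀
  set V' : Set H := V ∩ W₀ with hV'def
  have hV' : V' ∈ 𝓝 (1 : H) := Filter.inter_mem hV hW₀
  have hE : {p : H × H | p.2 / p.1 ∈ V'} ∈
      @uniformity H (IsTopologicalGroup.rightUniformSpace H) := by
    rw [uniformity_eq_comap_nhds_one']
    simp only [div_eq_mul_inv]
    exact Filter.preimage_mem_comap (m := fun p : H × H => p.2 * p.1⁻¹) hV'
  have hbig : (((fun q : (H × H) × (H × H) => (q.1.1, q.2.1)) ⁻¹' {p : H × H | p.2 / p.1 ∈ V'}) ∩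
      ((fun q : (H × H) × (H × H) => (q.1.2, q.2.2)) ⁻¹' {p : H × H | p.2 / p.1 ∈ V'})) ∩
      ((S ×ˢ S) ×ˢ (S ×ˢ S)) ∈
      prodUF (@uniformity H (IsTopologicalGroup.rightUniformSpace H)) ⊓ 𝓟 ((S ×ˢ S) ×ˢ (S ×ˢ S)) := by
    refine Filter.inter_mem (Filter.mem_inf_of_left ?_) (Filter.mem_inf_of_right ?_)
    · exact Filter.inter_mem (Filter.mem_inf_of_left (Filter.preimage_mem_comap hE))
        (Filter.mem_inf_of_right (Filter.preimage_mem_comap hE))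
    · exact Filter.mem_principal_self _
  rw [Filter.mem_map]
  refine Filter.mem_of_superset hbig ?_
  rintro ⟨⟨x₁, y₁⟩, ⟨x₂, y₂⟩⟩ ⟨⟨hx, hy⟩, ⟨⟨hx₁, hy₁⟩, ⟨hx₂, hy₂⟩⟩⟩
  apply hWD
  simp only [mem_preimage, mem_setOf_eq] at hx hy ⊢
  have key : (x₂ * y₂) / (x₁ * y₁) = (x₂ * (y₂ / y₁) * x₂⁻¹) * (x₂ / x₁) := by
    simp only [div_eq_mul_inv, mul_inv_rev]
    group
  rw [← div_eq_mul_inv, key]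
  exact hW₀mul _ (hVconj x₂ hx₂ _ hy.1) _ hx.2

theorem stmt_6 {G H : Type*} [Group G] [TopologicalSpace G] [IsTopologicalGroup G] [T2Space G]
    [Group H] [TopologicalSpace H] [IsTopologicalGroup H] [T2Space H]
    (f : G →* H) (hfc : Continuous f) (hfo : IsOpenMap f)
    (U : Set G) (hUo : IsOpen U) (hU1 : (1 : G) ∈ U) (hUs : U⁻¹ = U)
    (hG : ∃ u : UniformSpace G, u.toTopologicalSpace = ‹TopologicalSpace G› ∧
        MulUCOn (@uniformity G u) ((U ^ 2) ×ˢ (U ^ 2))) :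
    (f '' U)⁻¹ = f '' U ∧ IsOpen (f '' U) ∧ (1 : H) ∈ f '' U ∧
      ∃ v : UniformSpace H, v.toTopologicalSpace = ‹TopologicalSpace H› ∧
        MulUCOn (@uniformity H v) (((f '' U) ^ 2) ×ˢ ((f '' U) ^ 2)) := by
  obtain ⟨u, hut, hmuc⟩ := hG
  have hsin : LocSIN U := locSIN_of_mulUCOn U hUo hU1 hUs u hut hmuc
  have hsinH : LocSIN (f '' U) := locSIN_image f hfc hfo hsin
  have hsinH2 : LocSIN ((f '' U) ^ 2) := by
    rw [sq]; exact locSIN_mul hsinH hsinH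
  refine ⟨?_, hfo U hUo, ⟨1, hU1, map_one f⟩,
    IsTopologicalGroup.rightUniformSpace H, rfl, mulUCOn_of_locSIN hsinH2⟩
  ext y
  simp only [Set.mem_inv, Set.mem_image]
  constructor
  · rintro ⟨a, ha, hay⟩
    exact ⟨a⁻¹, by rw [← hUs, Set.mem_inv, inv_inv]; exact ha,
      by rw [map_inv, hay, inv_inv]⟩
  · rintro ⟨a, ha, rfl⟩
    exact ⟨a⁻¹, by rw [← hUs, Set.mem_inv, inv_inv]; exact ha, by rw [map_inv]⟩
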